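/- arXiv:2501.03871 — 5 statements merged into one kernel-verified Lean document; each statement's English description precedes it below -/
import Mathlib

section
/- Let m ≥ 1 and consider the triangle chain ∇_m. For every bottom vertex c_i and all vertices x, y of ∇_m with x ≠ c_i and y ≠ c_i, one has dist(x, c_i) + dist(c_i, y) > dist(x, y). Consequently, no shortest path in ∇_m contains a bottom vertex as an internal vertex. -/
def triChain (m : ℕ) : SimpleGraph (Fin (m + 1) ⊕ Fin m) where
  Adj x y :=
    match x, y with
    | Sum.inl i, Sum.inl j => (i : ℕ) + 1 = j ∨ (j : ℕ) + 1 = i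
    | Sum.inl i, Sum.inr j => (i : ℕ) = j ∨ (i : ℕ) = (j : ℕ) + 1
    | Sum.inr j, Sum.inl i => (i : ℕ) = j ∨ (i : ℕ) = (j : ℕ) + 1
    | Sum.inr _, Sum.inr _ => False
  symm := by
    constructor
    rintro (i | i) (j | j) h
    · exact Or.symm h
    · exact h
    · exact h
    · exact h
  loopless := by
    constructor
    rintro (i | i) h
    · have h' : (i : ℕ) + 1 = i ∨ (i : ℕ) + 1 = i := h
      omega
    · exact h

def dd (m : ℕ) : (Fin (m + 1) ⊕ Fin m) → (Fin (m + 1) ⊕ Fin m) → ℕ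
  | Sum.inl i, Sum.inl j => Nat.dist i j
  | Sum.inl i, Sum.inr j => min (Nat.dist i j) (Nat.dist i (j + 1)) + 1
  | Sum.inr j, Sum.inl i => min (Nat.dist i j) (Nat.dist i (j + 1)) + 1
  | Sum.inr i, Sum.inr j => if (i : ℕ) = j then 0 else Nat.dist i j + 1

lemma dd_le_adj {m : ℕ} (x y z : Fin (m + 1) ⊕ Fin m) (h : (triChain m).Adj x z) :
    dd m x y ≤ dd m z y + 1 := by
  rcases x with a | a <;> rcases z with c | c <;> rcases y with b | b <;>
    simp only [dd, triChain, Nat.dist] at * <;>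
    rcases h with h | h <;> (try split_ifs) <;> omega

lemma dd_le_length {m : ℕ} {x y : Fin (m + 1) ⊕ Fin m} (p : (triChain m).Walk x y) :
    dd m x y ≤ p.length := by
  induction p with
  | nil =>
    rename_i u
    rcases u with a | a <;> simp [dd, Nat.dist]
  | @cons u v w h q ih =>
    simp only [SimpleGraph.Walk.length_cons]
    have := dd_le_adj u w v h
    omega

lemma topWalk (m : ℕ) : ∀ (n : ℕ) (i j : Fin (m + 1)), Nat.dist i j = n →
    ∃ p : (triChain m).Walk (Sum.inl i) (Sum.inl j), p.length = n := by
  intro n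
  induction n with
  | zero =>
    intro i j hd
    have : i = j := Fin.ext (Nat.eq_of_dist_eq_zero hd)
    subst this
    exact ⟨SimpleGraph.Walk.nil, rfl⟩
  | succ n ih =>
    intro i j hd
    simp only [Nat.dist] at hd
    rcases lt_trichotomy (i : ℕ) (j : ℕ) with hlt | heq | hgt
    · have hb : (i : ℕ) + 1 < m + 1 := by have := j.isLt; omega
      set i' : Fin (m + 1) := ⟨(i : ℕ) + 1, hb⟩ with hi'
      have hadj : (triChain m).Adj (Sum.inl i) (Sum.inl i') := Or.inl rfl
      obtain ⟨p, hp⟩ := ih i' j (by simp [Nat.dist, hi']; omega)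
      exact ⟨SimpleGraph.Walk.cons hadj p, by simp [hp]⟩
    · omega
    · have hb : (i : ℕ) - 1 < m + 1 := by have := i.isLt; omega
      set i' : Fin (m + 1) := ⟨(i : ℕ) - 1, hb⟩ with hi'
      have hadj : (triChain m).Adj (Sum.inl i) (Sum.inl i') := Or.inr (by simp [hi']; omega)
      obtain ⟨p, hp⟩ := ih i' j (by simp [Nat.dist, hi']; omega)
      exact ⟨SimpleGraph.Walk.cons hadj p, by simp [hp]⟩

lemma exists_walk_dd (m : ℕ) (x y : Fin (m + 1) ⊕ Fin m) :
    ∃ p : (triChain m).Walk x y, p.length = dd m x y := by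
  have key : ∀ (i : Fin (m + 1)) (j : Fin m),
      ∃ p : (triChain m).Walk (Sum.inl i) (Sum.inr j), p.length = dd m (Sum.inl i) (Sum.inr j) := by
    intro i j
    by_cases h : Nat.dist (i : ℕ) (j : ℕ) ≤ Nat.dist (i : ℕ) ((j : ℕ) + 1)
    · set t : Fin (m + 1) := ⟨(j : ℕ), by have := j.isLt; omega⟩ with ht
      obtain ⟨p, hp⟩ := topWalk m (Nat.dist i t) i t rfl
      have hadj : (triChain m).Adj (Sum.inl t) (Sum.inr j) := Or.inl rfl
      refine ⟨p.concat hadj, ?_⟩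
      simp [SimpleGraph.Walk.length_concat, hp, dd, ht, min_eq_left h]
    · set t : Fin (m + 1) := ⟨(j : ℕ) + 1, by have := j.isLt; omega⟩ with ht
      obtain ⟨p, hp⟩ := topWalk m (Nat.dist i t) i t rfl
      have hadj : (triChain m).Adj (Sum.inl t) (Sum.inr j) := Or.inr rfl
      refine ⟨p.concat hadj, ?_⟩
      have : min (Nat.dist (i : ℕ) (j : ℕ)) (Nat.dist (i : ℕ) ((j : ℕ) + 1))
          = Nat.dist (i : ℕ) ((j : ℕ) + 1) := min_eq_right (by omega)
      simp [SimpleGraph.Walk.length_concat, hp, dd, ht, this]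
  rcases x with a | a <;> rcases y with b | b
  · exact topWalk m (Nat.dist a b) a b rfl
  · exact key a b
  · obtain ⟨p, hp⟩ := key b a
    exact ⟨p.reverse, by simpa [dd] using hp⟩
  · by_cases hab : (a : ℕ) = (b : ℕ)
    · have : a = b := Fin.ext hab
      subst this
      exact ⟨SimpleGraph.Walk.nil, by simp [dd]⟩
    · rcases lt_or_gt_of_ne hab with hlt | hgt
      · set t : Fin (m + 1) := ⟨(a : ℕ) + 1, by have := a.isLt; omega⟩ with ht
        have hadj : (triChain m).Adj (Sum.inr a) (Sum.inl t) := Or.inr rfl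
        set s : Fin (m + 1) := ⟨(b : ℕ), by have := b.isLt; omega⟩ with hs
        obtain ⟨p, hp⟩ := topWalk m (Nat.dist t s) t s rfl
        have hadj2 : (triChain m).Adj (Sum.inl s) (Sum.inr b) := Or.inl rfl
        refine ⟨SimpleGraph.Walk.cons hadj (p.concat hadj2), ?_⟩
        simp only [SimpleGraph.Walk.length_cons, SimpleGraph.Walk.length_concat, hp, dd,
          Nat.dist, ht, hs, if_neg hab]
        omega
      · set t : Fin (m + 1) := ⟨(a : ℕ), by have := a.isLt; omega⟩ with ht
        have hadj : (triChain m).Adj (Sum.inr a) (Sum.inl t) := Or.inl rfl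
        set s : Fin (m + 1) := ⟨(b : ℕ) + 1, by have := b.isLt; omega⟩ with hs
        obtain ⟨p, hp⟩ := topWalk m (Nat.dist t s) t s rfl
        have hadj2 : (triChain m).Adj (Sum.inl s) (Sum.inr b) := Or.inr rfl
        refine ⟨SimpleGraph.Walk.cons hadj (p.concat hadj2), ?_⟩
        simp only [SimpleGraph.Walk.length_cons, SimpleGraph.Walk.length_concat, hp, dd,
          Nat.dist, ht, hs, if_neg hab]
        omega

lemma dist_eq_dd (m : ℕ) (x y : Fin (m + 1) ⊕ Fin m) :
    (triChain m).dist x y = dd m x y := by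
  obtain ⟨p, hp⟩ := exists_walk_dd m x y
  have h1 : (triChain m).dist x y ≤ dd m x y := hp ▸ SimpleGraph.dist_le p
  have reach : (triChain m).Reachable x y := ⟨p⟩
  obtain ⟨q, hq⟩ := reach.exists_walk_length_eq_dist
  have h2 := dd_le_length q
  omega

/-- In the triangle chain `∇ m` (with `m ≥ 1`), for every bottom vertex `c_i` and all
vertices `x ≠ c_i`, `y ≠ c_i` we have `dist x c_i + dist c_i y > dist x y`; consequently,
no shortest path contains a bottom vertex as an internal vertex. -/
theorem stmt1 (m : ℕ) (hm : 1 ≤ m) :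
    (∀ (i : Fin m) (x y : Fin (m + 1) ⊕ Fin m),
      x ≠ Sum.inr i → y ≠ Sum.inr i →
      (triChain m).dist x (Sum.inr i) + (triChain m).dist (Sum.inr i) y
        > (triChain m).dist x y) ∧
    (∀ (x y : Fin (m + 1) ⊕ Fin m) (p : (triChain m).Walk x y),
      p.IsPath → p.length = (triChain m).dist x y →
      ∀ i : Fin m, Sum.inr i ∉ p.support.tail.dropLast) := by
  have part1 : ∀ (i : Fin m) (x y : Fin (m + 1) ⊕ Fin m),
      x ≠ Sum.inr i → y ≠ Sum.inr i →
      (triChain m).dist x (Sum.inr i) + (triChain m).dist (Sum.inr i) y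
        > (triChain m).dist x y := by
    intro i x y hx hy
    rw [dist_eq_dd, dist_eq_dd, dist_eq_dd]
    rcases x with a | a <;> rcases y with b | b
    · simp only [dd, Nat.dist]
      omega
    · have hb : (b : ℕ) ≠ (i : ℕ) := fun h => hy (by simpa using Fin.ext h)
      simp only [dd, Nat.dist, if_neg (Ne.symm hb)]
      omega
    · have ha : (a : ℕ) ≠ (i : ℕ) := fun h => hx (by simpa using Fin.ext h)
      simp only [dd, Nat.dist, if_neg ha]
      omega
    · have ha : (a : ℕ) ≠ (i : ℕ) := fun h => hx (by simpa using Fin.ext h)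
      have hb : (b : ℕ) ≠ (i : ℕ) := fun h => hy (by simpa using Fin.ext h)
      simp only [dd, Nat.dist, if_neg ha, if_neg (Ne.symm hb)]
      split_ifs <;> omega
  refine ⟨part1, ?_⟩
  intro x y p hpath hlen i hmem
  set v : Fin (m + 1) ⊕ Fin m := Sum.inr i with hv
  have hvsup : v ∈ p.support := by
    exact List.mem_of_mem_tail (List.mem_of_mem_dropLast hmem)
  -- v ≠ x
  have hnodup : p.support.Nodup := hpath.support_nodup
  have hvx : v ≠ x := by
    intro h
    have h1 : p.support = x :: p.support.tail := p.support_eq_cons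
    have : x ∉ p.support.tail := by
      rw [h1] at hnodup
      exact (List.nodup_cons.mp hnodup).1
    have hmv : v ∈ p.support.tail := List.mem_of_mem_dropLast hmem
    rw [h] at hmv
    exact this hmv
  -- v ≠ y
  have hvy : v ≠ y := by
    intro h
    have h1 : p.reverse.support = y :: p.reverse.support.tail := p.reverse.support_eq_cons
    have h2 : p.reverse.support.Nodup := by
      rw [SimpleGraph.Walk.support_reverse]
      exact List.nodup_reverse.mpr hnodup
    have hy : y ∉ p.reverse.support.tail := by
      rw [h1] at h2
      exact (List.nodup_cons.mp h2).1
    -- p.reverse.support.tail = p.support.dropLast.reverse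
    have h3 : p.reverse.support.tail = p.support.dropLast.reverse := by
      rw [SimpleGraph.Walk.support_reverse, List.tail_reverse]
    have hy' : y ∉ p.support.dropLast := by
      intro hc
      exact hy (h3 ▸ List.mem_reverse.mpr hc)
    -- v ∈ p.support.dropLast
    have hv' : v ∈ p.support.dropLast := by
      have h1 : p.support = x :: p.support.tail := p.support_eq_cons
      have htne : p.support.tail ≠ [] := by
        intro hnil
        rw [hnil] at hmem
        simp at hmem
      rw [h1, List.dropLast_cons_of_ne_nil htne]
      exact List.mem_cons_of_mem _ hmem
    exact hy' (h ▸ hv')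
  -- split walk
  have hd1 : (triChain m).dist x v ≤ (p.takeUntil v hvsup).length :=
    SimpleGraph.dist_le _
  have hd2 : (triChain m).dist v y ≤ (p.dropUntil v hvsup).length :=
    SimpleGraph.dist_le _
  have hsum : (p.takeUntil v hvsup).length + (p.dropUntil v hvsup).length = p.length := by
    have h5 := congr_arg SimpleGraph.Walk.length (p.take_spec hvsup)
    rwa [SimpleGraph.Walk.length_append] at h5
  have hkey := part1 i x y (Ne.symm hvx) (Ne.symm hvy)
  rw [← hv] at hkey
  omega
end

section
/- Let m ≥ 1 and let W_1 and W_2 be walks in the triangle chain ∇_m, both from u_0 to u_m, that respect unit capacities (every edge of ∇_m is traversed at most once in total by W_1 and W_2). Then for every i ∈ {1,…,m} there is a labeling {W, W'} = {W_1, W_2} such that W traverses the top edge u_{i−1}u_i exactly once and traverses neither bottom edge of triangle i, while W' traverses each of the two bottom edges u_{i−1}c_i and c_i u_i exactly once and does not traverse the top edge of triangle i; in particular, c_i is an internal vertex of exactly one of W_1, W_2. -/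
/-- The number of occurrences of `a` in the list `l` (counted with multiplicity). -/
noncomputable def cnt {α : Type*} (a : α) (l : List α) : ℕ :=
  letI := Classical.decEq α
  l.count a

open SimpleGraph

namespace Stmt2Aux

/-- Crossing predicate for a cut given by a boolean vertex-labeling. -/
def crossP {α : Type*} (f : α → Bool) : Sym2 α → Bool :=
  Sym2.lift ⟨fun x y => f x != f y, by intro x y; show (f x != f y) = (f y != f x); cases f x <;> cases f y <;> rfl⟩

lemma crossP_mk {α : Type*} (f : α → Bool) (x y : α) :
    crossP f s(x, y) = (f x != f y) := rfl

/-- Parity of the number of cut-crossing edges of a walk. -/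
lemma parity {V : Type*} {G : SimpleGraph V} (f : V → Bool) {a b : V} (W : G.Walk a b) :
    W.edges.countP (crossP f) % 2 = if f a = f b then 0 else 1 := by
  induction W with
  | nil => simp
  | @cons u v w h p ih =>
    rw [Walk.edges_cons, List.countP_cons]
    cases hu : f u <;> cases hv : f v <;> cases hw : f w <;>
      simp [crossP_mk, hu, hv, hw] at ih ⊢ <;> omega

lemma countP_eq_count_add_count {α : Type*} [DecidableEq α] {P : α → Bool} {t b : α}
    (hne : t ≠ b) (l : List α) (h : ∀ e ∈ l, (P e = true ↔ (e = t ∨ e = b))) :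
    l.countP P = l.count t + l.count b := by
  induction l with
  | nil => simp
  | cons x xs ih =>
    rw [List.countP_cons, List.count_cons, List.count_cons]
    have hx := h x (by simp)
    have ih' := ih (fun e he => h e (by simp [he]))
    by_cases h1 : x = t <;> by_cases h2 : x = b <;>
      simp_all <;> omega

lemma exists_edge_of_mem_support {V' : Type*} {G : SimpleGraph V'} {a b v : V'}
    (W : G.Walk a b) (hv : v ∈ W.support) (hva : v ≠ a) : ∃ e ∈ W.edges, v ∈ e := by
  induction W with
  | nil => simp at hv; exact absurd hv hva
  | @cons u x w h p ih =>
    rw [Walk.support_cons, List.mem_cons] at hv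
    rcases hv with h1 | h1
    · exact absurd h1 hva
    · by_cases hvx : v = x
      · exact ⟨s(u, x), by simp, by simp [hvx]⟩
      · obtain ⟨e, he, hve⟩ := ih h1 hvx
        exact ⟨e, by simp [Walk.edges_cons, he], hve⟩

variable {m : ℕ}

lemma adj_iff (x y : Fin (m + 1) ⊕ Fin m) :
    (triChain m).Adj x y ↔ (match x, y with
    | Sum.inl i, Sum.inl j => (i : ℕ) + 1 = j ∨ (j : ℕ) + 1 = i
    | Sum.inl i, Sum.inr j => (i : ℕ) = j ∨ (i : ℕ) = (j : ℕ) + 1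
    | Sum.inr j, Sum.inl i => (i : ℕ) = j ∨ (i : ℕ) = (j : ℕ) + 1
    | Sum.inr _, Sum.inr _ => False) := Iff.rfl

/-- Side function of cut A at position `i`: crossing edges are the top edge of
triangle `i` and the left bottom edge `u_i c_i`. -/
def sideA (i : ℕ) : Fin (m + 1) ⊕ Fin m → Bool
  | Sum.inl j => decide ((j : ℕ) ≤ i)
  | Sum.inr j => decide ((j : ℕ) < i)

/-- Side function of cut B at position `i`: crossing edges are the top edge of
triangle `i` and the right bottom edge `c_i u_{i+1}`. -/
def sideB (i : ℕ) : Fin (m + 1) ⊕ Fin m → Bool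
  | Sum.inl j => decide ((j : ℕ) ≤ i)
  | Sum.inr j => decide ((j : ℕ) ≤ i)

lemma classA (i : Fin m) (e : Sym2 (Fin (m + 1) ⊕ Fin m)) (he : e ∈ (triChain m).edgeSet) :
    crossP (sideA (i : ℕ)) e = true ↔
      (e = s(Sum.inl i.castSucc, Sum.inl i.succ) ∨ e = s(Sum.inl i.castSucc, Sum.inr i)) := by
  induction e using Sym2.ind with
  | _ x y =>
    rw [SimpleGraph.mem_edgeSet, adj_iff] at he
    rcases x with j | j <;> rcases y with j' | j' <;>
      simp only [crossP_mk, sideA, bne_iff_ne, ne_eq, decide_eq_decide, Sym2.eq_iff,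
        Sum.inl.injEq, Sum.inr.injEq, Fin.ext_iff, Fin.coe_castSucc, Fin.val_succ,
        reduceCtorEq, and_false, false_and, or_false, false_or, or_self] at he ⊢ <;>
      omega

lemma classB (i : Fin m) (e : Sym2 (Fin (m + 1) ⊕ Fin m)) (he : e ∈ (triChain m).edgeSet) :
    crossP (sideB (i : ℕ)) e = true ↔
      (e = s(Sum.inl i.castSucc, Sum.inl i.succ) ∨ e = s(Sum.inr i, Sum.inl i.succ)) := by
  induction e using Sym2.ind with
  | _ x y =>
    rw [SimpleGraph.mem_edgeSet, adj_iff] at he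
    rcases x with j | j <;> rcases y with j' | j' <;>
      simp only [crossP_mk, sideB, bne_iff_ne, ne_eq, decide_eq_decide, Sym2.eq_iff,
        Sum.inl.injEq, Sum.inr.injEq, Fin.ext_iff, Fin.coe_castSucc, Fin.val_succ,
        reduceCtorEq, and_false, false_and, or_false, false_or, or_self] at he ⊢ <;>
      omega

lemma edge_of_inr (i : Fin m) (e : Sym2 (Fin (m + 1) ⊕ Fin m))
    (he : e ∈ (triChain m).edgeSet) (hm : Sum.inr i ∈ e) :
    e = s(Sum.inl i.castSucc, Sum.inr i) ∨ e = s(Sum.inr i, Sum.inl i.succ) := by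
  induction e using Sym2.ind with
  | _ x y =>
    rw [SimpleGraph.mem_edgeSet, adj_iff] at he
    rw [Sym2.mem_iff] at hm
    rcases x with j | j <;> rcases y with j' | j' <;>
      simp only [Sym2.eq_iff, Sum.inl.injEq, Sum.inr.injEq, Fin.ext_iff, Fin.coe_castSucc,
        Fin.val_succ, reduceCtorEq, and_false, false_and, and_true, true_and,
        or_false, false_or, or_self] at he hm ⊢ <;>
      omega

end Stmt2Aux

namespace Stmt2Aux

lemma cnt_pos {α : Type*} {a : α} {l : List α} : 0 < cnt a l ↔ a ∈ l := by
  letI := Classical.decEq α; unfold cnt; exact List.count_pos_iff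

lemma cnt_eq_zero {α : Type*} {a : α} {l : List α} : cnt a l = 0 ↔ a ∉ l := by
  letI := Classical.decEq α; unfold cnt; exact List.count_eq_zero

lemma cutA (i : Fin m) (W : (triChain m).Walk (Sum.inl 0) (Sum.inl (Fin.last m))) :
    (cnt s(Sum.inl i.castSucc, Sum.inl i.succ) W.edges +
      cnt s(Sum.inl i.castSucc, Sum.inr i) W.edges) % 2 = 1 := by
  letI := Classical.decEq (Fin (m + 1) ⊕ Fin m)
  have hne : s(Sum.inl i.castSucc, Sum.inl i.succ) ≠
      s((Sum.inl i.castSucc : Fin (m + 1) ⊕ Fin m), Sum.inr i) := by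
    simp [Sym2.eq_iff]
  have hclass : ∀ e ∈ W.edges, (crossP (sideA (i : ℕ)) e = true ↔
      (e = s(Sum.inl i.castSucc, Sum.inl i.succ) ∨ e = s(Sum.inl i.castSucc, Sum.inr i))) :=
    fun e he => classA i e (W.edges_subset_edgeSet he)
  unfold cnt
  rw [← @countP_eq_count_add_count _ (Classical.decEq _) _ _ _ hne W.edges hclass, parity (sideA (i : ℕ)) W]
  have h0 : sideA (i : ℕ) (Sum.inl (0 : Fin (m + 1))) = true := by
    simp [sideA]
  have hl : sideA (i : ℕ) (Sum.inl (Fin.last m)) = false := by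
    have := i.isLt
    simp [sideA, Fin.val_last]
  rw [h0, hl]; simp

lemma cutB (i : Fin m) (W : (triChain m).Walk (Sum.inl 0) (Sum.inl (Fin.last m))) :
    (cnt s(Sum.inl i.castSucc, Sum.inl i.succ) W.edges +
      cnt s(Sum.inr i, Sum.inl i.succ) W.edges) % 2 = 1 := by
  letI := Classical.decEq (Fin (m + 1) ⊕ Fin m)
  have hne : s(Sum.inl i.castSucc, Sum.inl i.succ) ≠
      s((Sum.inr i : Fin (m + 1) ⊕ Fin m), Sum.inl i.succ) := by
    simp [Sym2.eq_iff]
  have hclass : ∀ e ∈ W.edges, (crossP (sideB (i : ℕ)) e = true ↔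
      (e = s(Sum.inl i.castSucc, Sum.inl i.succ) ∨ e = s(Sum.inr i, Sum.inl i.succ))) :=
    fun e he => classB i e (W.edges_subset_edgeSet he)
  unfold cnt
  rw [← @countP_eq_count_add_count _ (Classical.decEq _) _ _ _ hne W.edges hclass, parity (sideB (i : ℕ)) W]
  have h0 : sideB (i : ℕ) (Sum.inl (0 : Fin (m + 1))) = true := by
    simp [sideB]
  have hl : sideB (i : ℕ) (Sum.inl (Fin.last m)) = false := by
    have := i.isLt
    simp [sideB, Fin.val_last]
  rw [h0, hl]; simp

lemma mem_support_of (i : Fin m) (W : (triChain m).Walk (Sum.inl 0) (Sum.inl (Fin.last m)))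
    (h : cnt s(Sum.inl i.castSucc, Sum.inr i) W.edges = 1) : Sum.inr i ∈ W.support := by
  have : s((Sum.inl i.castSucc : Fin (m + 1) ⊕ Fin m), Sum.inr i) ∈ W.edges :=
    cnt_pos.mp (by omega)
  exact W.snd_mem_support_of_mem_edges this

lemma not_mem_support_of (i : Fin m) (W : (triChain m).Walk (Sum.inl 0) (Sum.inl (Fin.last m)))
    (h1 : cnt s(Sum.inl i.castSucc, Sum.inr i) W.edges = 0)
    (h2 : cnt s(Sum.inr i, Sum.inl i.succ) W.edges = 0) : Sum.inr i ∉ W.support := by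
  intro hv
  obtain ⟨e, he, hie⟩ := exists_edge_of_mem_support W hv (by simp)
  rcases edge_of_inr i e (W.edges_subset_edgeSet he) hie with rfl | rfl
  · exact cnt_eq_zero.mp h1 he
  · exact cnt_eq_zero.mp h2 he

end Stmt2Aux

/-- if two walks in `∇ m` from `u_0` to `u_m` respect unit capacities, then in
every triangle `i` one of them uses precisely the top edge of triangle `i` and the other
precisely the two bottom edges of triangle `i`; in particular the bottom vertex `c_i` is an
internal vertex of exactly one of the two walks. -/
theorem stmt2 (m : ℕ) (hm : 1 ≤ m)
    (W₁ W₂ : (triChain m).Walk (Sum.inl 0) (Sum.inl (Fin.last m)))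
    (hcap : ∀ e : Sym2 (Fin (m + 1) ⊕ Fin m), cnt e W₁.edges + cnt e W₂.edges ≤ 1) :
    ∀ i : Fin m,
      (((cnt s(Sum.inl i.castSucc, Sum.inl i.succ) W₁.edges = 1 ∧
          cnt s(Sum.inl i.castSucc, Sum.inr i) W₁.edges = 0 ∧
          cnt s(Sum.inr i, Sum.inl i.succ) W₁.edges = 0 ∧
          cnt s(Sum.inl i.castSucc, Sum.inr i) W₂.edges = 1 ∧
          cnt s(Sum.inr i, Sum.inl i.succ) W₂.edges = 1 ∧
          cnt s(Sum.inl i.castSucc, Sum.inl i.succ) W₂.edges = 0) ∨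
        (cnt s(Sum.inl i.castSucc, Sum.inl i.succ) W₂.edges = 1 ∧
          cnt s(Sum.inl i.castSucc, Sum.inr i) W₂.edges = 0 ∧
          cnt s(Sum.inr i, Sum.inl i.succ) W₂.edges = 0 ∧
          cnt s(Sum.inl i.castSucc, Sum.inr i) W₁.edges = 1 ∧
          cnt s(Sum.inr i, Sum.inl i.succ) W₁.edges = 1 ∧
          cnt s(Sum.inl i.castSucc, Sum.inl i.succ) W₁.edges = 0)) ∧
      ((Sum.inr i ∈ W₁.support ∧ Sum.inr i ∉ W₂.support) ∨
        (Sum.inr i ∉ W₁.support ∧ Sum.inr i ∈ W₂.support))) := by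
  intro i
  have p1A := Stmt2Aux.cutA i W₁
  have p2A := Stmt2Aux.cutA i W₂
  have p1B := Stmt2Aux.cutB i W₁
  have p2B := Stmt2Aux.cutB i W₂
  have ct := hcap s(Sum.inl i.castSucc, Sum.inl i.succ)
  have cb1 := hcap s(Sum.inl i.castSucc, Sum.inr i)
  have cb2 := hcap s(Sum.inr i, Sum.inl i.succ)
  have hmain :
      ((cnt s(Sum.inl i.castSucc, Sum.inl i.succ) W₁.edges = 1 ∧
          cnt s(Sum.inl i.castSucc, Sum.inr i) W₁.edges = 0 ∧
          cnt s(Sum.inr i, Sum.inl i.succ) W₁.edges = 0 ∧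
          cnt s(Sum.inl i.castSucc, Sum.inr i) W₂.edges = 1 ∧
          cnt s(Sum.inr i, Sum.inl i.succ) W₂.edges = 1 ∧
          cnt s(Sum.inl i.castSucc, Sum.inl i.succ) W₂.edges = 0) ∨
        (cnt s(Sum.inl i.castSucc, Sum.inl i.succ) W₂.edges = 1 ∧
          cnt s(Sum.inl i.castSucc, Sum.inr i) W₂.edges = 0 ∧
          cnt s(Sum.inr i, Sum.inl i.succ) W₂.edges = 0 ∧
          cnt s(Sum.inl i.castSucc, Sum.inr i) W₁.edges = 1 ∧
          cnt s(Sum.inr i, Sum.inl i.succ) W₁.edges = 1 ∧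
          cnt s(Sum.inl i.castSucc, Sum.inl i.succ) W₁.edges = 0)) := by
    omega
  refine ⟨hmain, ?_⟩
  rcases hmain with ⟨h1, h2, h3, h4, h5, h6⟩ | ⟨h1, h2, h3, h4, h5, h6⟩
  · exact Or.inr ⟨Stmt2Aux.not_mem_support_of i W₁ h2 h3, Stmt2Aux.mem_support_of i W₂ h4⟩
  · exact Or.inl ⟨Stmt2Aux.mem_support_of i W₁ h4, Stmt2Aux.not_mem_support_of i W₂ h2 h3⟩
end

section
/- Let ℓ ≥ 1 and k ≥ 0 be integers. Suppose W_1 and W_2 are walks in the triangle chain ∇_{2ℓ}, both from u_0 to u_{2ℓ}, that respect unit capacities (every edge of ∇_{2ℓ} is traversed at most once in total by W_1 and W_2), and suppose each of W_1 and W_2 is a concatenation of at most k + 1 geodesics. Then k ≥ ℓ. -/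
/-- `ConcatGeo G j w` means the walk `w` is a concatenation of (exactly) `j` consecutive
geodesics, i.e. subwalks whose length equals the graph distance between their endpoints. -/
inductive ConcatGeo {V : Type*} (G : SimpleGraph V) : ℕ → ∀ {x y : V}, G.Walk x y → Prop
  | nil {x : V} : ConcatGeo G 0 (SimpleGraph.Walk.nil : G.Walk x x)
  | cons {j : ℕ} {x y z : V} (p : G.Walk x y) (q : G.Walk y z)
      (hp : p.length = G.dist x y) (hq : ConcatGeo G j q) :
      ConcatGeo G (j + 1) (p.append q)

section Aux

open SimpleGraph

variable {m : ℕ}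

/-- The left bottom edge of triangle `t+1`. -/
def botL (m : ℕ) (t : Fin m) : Sym2 (Fin (m + 1) ⊕ Fin m) :=
  s(Sum.inl t.castSucc, Sum.inr t)

/-- The right bottom edge of triangle `t+1`. -/
def botR (m : ℕ) (t : Fin m) : Sym2 (Fin (m + 1) ⊕ Fin m) :=
  s(Sum.inr t, Sum.inl t.succ)

/-- The top edge of triangle `t+1`. -/
def topE (m : ℕ) (t : Fin m) : Sym2 (Fin (m + 1) ⊕ Fin m) :=
  s(Sum.inl t.castSucc, Sum.inl t.succ)

/-- The total number of bottom edges occurring in a list (with multiplicity). -/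
noncomputable def bcount (m : ℕ) (l : List (Sym2 (Fin (m + 1) ⊕ Fin m))) : ℕ :=
  ∑ t : Fin m, (cnt (botL m t) l + cnt (botR m t) l)

/-- Potential function: doubled horizontal position. -/
def fv (m : ℕ) : Fin (m + 1) ⊕ Fin m → ℤ
  | Sum.inl a => 2 * (a : ℕ)
  | Sum.inr j => 2 * (j : ℕ) + 1

/-- Indicator that a vertex is a bottom vertex. -/
def eps (m : ℕ) : Fin (m + 1) ⊕ Fin m → ℕ
  | Sum.inl _ => 0
  | Sum.inr _ => 1

lemma eps_le_one (x : Fin (m + 1) ⊕ Fin m) : eps m x ≤ 1 := by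
  cases x <;> simp [eps]

lemma cnt_nil {α : Type*} (a : α) : cnt a ([] : List α) = 0 := by
  simp [cnt]

lemma cnt_append {α : Type*} (a : α) (l₁ l₂ : List α) :
    cnt a (l₁ ++ l₂) = cnt a l₁ + cnt a l₂ := by
  simp [cnt]

lemma cnt_singleton {α : Type*} [DecidableEq α] (a e : α) : cnt a [e] = if a = e then 1 else 0 := by
  rcases eq_or_ne a e with rfl | h
  · simp [cnt]
  · simp [cnt, List.count_eq_zero_of_not_mem, h]

lemma cnt_pos_of_mem {α : Type*} {a : α} {l : List α} (h : a ∈ l) : 1 ≤ cnt a l := by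
  letI := Classical.decEq α
  have hpos : 0 < l.count a := List.count_pos_iff.mpr h
  unfold cnt
  exact hpos

lemma bcount_nil : bcount m [] = 0 := by
  simp [bcount, cnt_nil]

lemma bcount_append (l₁ l₂ : List (Sym2 (Fin (m + 1) ⊕ Fin m))) :
    bcount m (l₁ ++ l₂) = bcount m l₁ + bcount m l₂ := by
  unfold bcount
  rw [← Finset.sum_add_distrib]
  refine Finset.sum_congr rfl fun t _ => ?_
  rw [cnt_append, cnt_append]
  ring

lemma bcount_cons (e : Sym2 (Fin (m + 1) ⊕ Fin m)) (l : List (Sym2 (Fin (m + 1) ⊕ Fin m))) :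
    bcount m (e :: l) = bcount m [e] + bcount m l := by
  have : e :: l = [e] ++ l := rfl
  rw [this, bcount_append]

lemma bcount_single_top (i i' : Fin (m + 1)) :
    bcount m [s(Sum.inl i, Sum.inl i')] = 0 := by
  unfold bcount
  refine Finset.sum_eq_zero fun t _ => ?_
  have h1 : ¬ botL m t = s(Sum.inl i, Sum.inl i') := by simp [botL, Sym2.eq_iff]
  have h2 : ¬ botR m t = s(Sum.inl i, Sum.inl i') := by simp [botR, Sym2.eq_iff]
  rw [cnt_singleton, cnt_singleton, if_neg h1, if_neg h2]
  rfl

lemma bcount_single_bot (i : Fin (m + 1)) (j : Fin m)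
    (h : (i : ℕ) = j ∨ (i : ℕ) = (j : ℕ) + 1) :
    bcount m [s(Sum.inl i, Sum.inr j)] = 1 := by
  unfold bcount
  rcases h with h | h
  · have : ∀ t : Fin m, (cnt (botL m t) [s(Sum.inl i, Sum.inr j)] +
        cnt (botR m t) [s(Sum.inl i, Sum.inr j)]) = if t = j then 1 else 0 := by
      intro t
      have h1 : (botL m t = s(Sum.inl i, Sum.inr j)) ↔ t = j := by
        simp only [botL, Sym2.eq_iff, Sum.inl.injEq, Sum.inr.injEq, reduceCtorEq,
          false_and, and_false, or_false, Fin.ext_iff, Fin.coe_castSucc]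
        omega
      have h2 : ¬ (botR m t = s(Sum.inl i, Sum.inr j)) := by
        simp only [botR, Sym2.eq_iff, Sum.inl.injEq, Sum.inr.injEq, reduceCtorEq,
          false_and, and_false, false_or, Fin.ext_iff, Fin.val_succ]
        omega
      rw [cnt_singleton, cnt_singleton, if_neg h2]
      by_cases ht : t = j
      · rw [if_pos (h1.mpr ht), if_pos ht]
      · rw [if_neg (fun hc => ht (h1.mp hc)), if_neg ht]
    rw [Finset.sum_congr rfl fun t _ => this t]
    simp
  · have : ∀ t : Fin m, (cnt (botL m t) [s(Sum.inl i, Sum.inr j)] +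
        cnt (botR m t) [s(Sum.inl i, Sum.inr j)]) = if t = j then 1 else 0 := by
      intro t
      have h1 : ¬ (botL m t = s(Sum.inl i, Sum.inr j)) := by
        simp only [botL, Sym2.eq_iff, Sum.inl.injEq, Sum.inr.injEq, reduceCtorEq,
          false_and, and_false, or_false, Fin.ext_iff, Fin.coe_castSucc]
        omega
      have h2 : (botR m t = s(Sum.inl i, Sum.inr j)) ↔ t = j := by
        simp only [botR, Sym2.eq_iff, Sum.inl.injEq, Sum.inr.injEq, reduceCtorEq,
          false_and, and_false, false_or, Fin.ext_iff, Fin.val_succ]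
        omega
      rw [cnt_singleton, cnt_singleton, if_neg h1]
      by_cases ht : t = j
      · rw [if_pos (h2.mpr ht), if_pos ht]
      · rw [if_neg (fun hc => ht (h2.mp hc)), if_neg ht]
    rw [Finset.sum_congr rfl fun t _ => this t]
    simp

lemma step_bound {x w : Fin (m + 1) ⊕ Fin m} (hadj : (triChain m).Adj x w) :
    (bcount m [s(x, w)] : ℤ) + |fv m x - fv m w| ≤ 2 := by
  rcases x with a | a <;> rcases w with b | b
  · have hadj' : (a : ℕ) + 1 = b ∨ (b : ℕ) + 1 = a := hadj
    rw [bcount_single_top]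
    simp only [fv, Nat.cast_zero]
    rcases hadj' with h | h
    · rw [abs_of_nonpos (by omega)]; push_cast; omega
    · rw [abs_of_nonneg (by omega)]; push_cast; omega
  · have hadj' : (a : ℕ) = b ∨ (a : ℕ) = (b : ℕ) + 1 := hadj
    rw [bcount_single_bot a b hadj']
    simp only [fv]
    rcases hadj' with h | h
    · rw [abs_of_nonpos (by omega)]; push_cast; omega
    · rw [abs_of_nonneg (by omega)]; push_cast; omega
  · have hadj' : (b : ℕ) = a ∨ (b : ℕ) = (a : ℕ) + 1 := hadj
    have hswap : s(Sum.inr a, Sum.inl b) = s(Sum.inl b, Sum.inr a) := Sym2.eq_swap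
    rw [hswap, bcount_single_bot b a hadj']
    simp only [fv]
    rcases hadj' with h | h
    · rw [abs_of_nonneg (by omega)]; push_cast; omega
    · rw [abs_of_nonpos (by omega)]; push_cast; omega
  · exact absurd hadj (by simp [triChain])

lemma walk_bound {x y : Fin (m + 1) ⊕ Fin m} (p : (triChain m).Walk x y) :
    (bcount m p.edges : ℤ) + |fv m x - fv m y| ≤ 2 * p.length := by
  induction p with
  | nil => simp [bcount_nil]
  | @cons x w y hadj q ih =>
    rw [SimpleGraph.Walk.edges_cons, bcount_cons, SimpleGraph.Walk.length_cons]
    have h1 := step_bound hadj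
    have h2 : |fv m x - fv m y| ≤ |fv m x - fv m w| + |fv m w - fv m y| := abs_sub_le _ _ _
    push_cast
    push_cast at ih
    linarith

lemma topwalk (m : ℕ) : ∀ (d : ℕ) (a b : Fin (m + 1)), (a : ℕ) + d = b →
    ∃ p : (triChain m).Walk (Sum.inl a) (Sum.inl b), p.length = d := by
  intro d
  induction d with
  | zero =>
    intro a b h
    have : a = b := Fin.ext (by omega)
    subst this
    exact ⟨.nil, rfl⟩
  | succ n ih =>
    intro a b h
    have hb := b.isLt
    have ha1 : (a : ℕ) + 1 < m + 1 := by omega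
    set a' : Fin (m + 1) := ⟨(a : ℕ) + 1, ha1⟩ with ha'
    have hadj : (triChain m).Adj (Sum.inl a) (Sum.inl a') := Or.inl rfl
    obtain ⟨p, hp⟩ := ih a' b (by simp [ha']; omega)
    exact ⟨.cons hadj p, by simp [hp]⟩

lemma walk_exists (m : ℕ) (x y : Fin (m + 1) ⊕ Fin m) :
    ∃ p : (triChain m).Walk x y,
      2 * (p.length : ℤ) ≤ |fv m x - fv m y| + eps m x + eps m y := by
  have symm : ∀ x y : Fin (m + 1) ⊕ Fin m,
      (∃ p : (triChain m).Walk x y,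
        2 * (p.length : ℤ) ≤ |fv m x - fv m y| + eps m x + eps m y) →
      ∃ p : (triChain m).Walk y x,
        2 * (p.length : ℤ) ≤ |fv m y - fv m x| + eps m y + eps m x := by
    rintro x y ⟨p, hp⟩
    refine ⟨p.reverse, ?_⟩
    rw [SimpleGraph.Walk.length_reverse, abs_sub_comm]
    linarith
  have case_ll : ∀ a b : Fin (m + 1), (a : ℕ) ≤ b →
      ∃ p : (triChain m).Walk (Sum.inl a : Fin (m + 1) ⊕ Fin m) (Sum.inl b),
        2 * (p.length : ℤ) ≤ |fv m (Sum.inl a) - fv m (Sum.inl b)| +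
          eps m (Sum.inl a) + eps m (Sum.inl b) := by
    intro a b hab
    obtain ⟨p, hp⟩ := topwalk m ((b : ℕ) - a) a b (by omega)
    refine ⟨p, ?_⟩
    simp only [fv, eps, hp]
    rw [abs_of_nonpos (by push_cast; omega)]
    push_cast
    omega
  have case_lr : ∀ (a : Fin (m + 1)) (j : Fin m),
      ∃ p : (triChain m).Walk (Sum.inl a : Fin (m + 1) ⊕ Fin m) (Sum.inr j),
        2 * (p.length : ℤ) ≤ |fv m (Sum.inl a) - fv m (Sum.inr j)| +
          eps m (Sum.inl a) + eps m (Sum.inr j) := by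
    intro a j
    rcases le_or_gt (a : ℕ) (j : ℕ) with hle | hlt
    · obtain ⟨p, hp⟩ := topwalk m ((j : ℕ) - a) a j.castSucc (by simp; omega)
      have hadj : (triChain m).Adj (Sum.inl j.castSucc) (Sum.inr j) := Or.inl rfl
      refine ⟨p.append (.cons hadj .nil), ?_⟩
      simp only [fv, eps, SimpleGraph.Walk.length_append, SimpleGraph.Walk.length_cons,
        SimpleGraph.Walk.length_nil, hp]
      rw [abs_of_nonpos (by push_cast; omega)]
      push_cast
      omega
    · obtain ⟨p, hp⟩ := topwalk m ((a : ℕ) - (j : ℕ) - 1) j.succ a (by simp; omega)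
      have hadj : (triChain m).Adj (Sum.inr j) (Sum.inl j.succ) := Or.inr (by simp)
      refine ⟨(SimpleGraph.Walk.cons hadj p).reverse, ?_⟩
      simp only [fv, eps, SimpleGraph.Walk.length_reverse, SimpleGraph.Walk.length_cons, hp]
      rw [abs_of_nonneg (by push_cast; omega)]
      push_cast
      omega
  rcases x with a | a <;> rcases y with b | b
  · rcases le_or_gt (a : ℕ) (b : ℕ) with h | h
    · exact case_ll a b h
    · exact symm _ _ (case_ll b a (by omega))
  · exact case_lr a b
  · exact symm _ _ (case_lr b a)
  · rcases lt_trichotomy (a : ℕ) (b : ℕ) with h | h | h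
    · have hb := b.isLt
      obtain ⟨p, hp⟩ := topwalk m ((b : ℕ) - (a : ℕ) - 1) a.succ b.castSucc (by simp; omega)
      have hadj1 : (triChain m).Adj (Sum.inr a) (Sum.inl a.succ) := Or.inr (by simp)
      have hadj2 : (triChain m).Adj (Sum.inl b.castSucc) (Sum.inr b) := Or.inl rfl
      refine ⟨.cons hadj1 (p.append (.cons hadj2 .nil)), ?_⟩
      simp only [fv, eps, SimpleGraph.Walk.length_cons, SimpleGraph.Walk.length_append,
        SimpleGraph.Walk.length_nil, hp]
      rw [abs_of_nonpos (by push_cast; omega)]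
      push_cast
      omega
    · have : a = b := Fin.ext h
      subst this
      exact ⟨.nil, by simp [fv, eps]⟩
    · apply symm
      have hb := a.isLt
      obtain ⟨p, hp⟩ := topwalk m ((a : ℕ) - (b : ℕ) - 1) b.succ a.castSucc (by simp; omega)
      have hadj1 : (triChain m).Adj (Sum.inr b) (Sum.inl b.succ) := Or.inr (by simp)
      have hadj2 : (triChain m).Adj (Sum.inl a.castSucc) (Sum.inr a) := Or.inl rfl
      refine ⟨.cons hadj1 (p.append (.cons hadj2 .nil)), ?_⟩
      simp only [fv, eps, SimpleGraph.Walk.length_cons, SimpleGraph.Walk.length_append,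
        SimpleGraph.Walk.length_nil, hp]
      rw [abs_of_nonpos (by push_cast; omega)]
      push_cast
      omega

lemma geo_bound {x y : Fin (m + 1) ⊕ Fin m} {p : (triChain m).Walk x y}
    (hp : p.length = (triChain m).dist x y) :
    bcount m p.edges ≤ eps m x + eps m y := by
  have h1 := walk_bound p
  obtain ⟨q, hq⟩ := walk_exists m x y
  have h2 : (triChain m).dist x y ≤ q.length := SimpleGraph.dist_le q
  have h3 : (p.length : ℤ) ≤ q.length := by exact_mod_cast hp ▸ Nat.cast_le.mpr h2
  have habs : (0 : ℤ) ≤ |fv m x - fv m y| := abs_nonneg _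
  have : (bcount m p.edges : ℤ) ≤ eps m x + eps m y := by linarith
  exact_mod_cast this

lemma concat_bound {j : ℕ} {x y : Fin (m + 1) ⊕ Fin m} {w : (triChain m).Walk x y}
    (h : ConcatGeo (triChain m) j w) :
    bcount m w.edges + 2 ≤ eps m x + eps m y + 2 * j ∨
      (bcount m w.edges = 0 ∧ x = y) := by
  induction h with
  | nil => right; exact ⟨by simp [bcount_nil], rfl⟩
  | @cons j x y z p q hp hq ih =>
    rw [SimpleGraph.Walk.edges_append, bcount_append]
    have hgeo : bcount m p.edges ≤ eps m x + eps m y := geo_bound hp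
    have hey : eps m y ≤ 1 := eps_le_one y
    rcases ih with h1 | ⟨h1, h2⟩
    · left; omega
    · subst h2
      left
      omega

lemma exists_cross {V : Type*} {G : SimpleGraph V} (P : V → Prop) :
    ∀ {x y : V} (p : G.Walk x y), ¬ P x → P y →
      ∃ a b, ¬ P a ∧ P b ∧ s(a, b) ∈ p.edges := by
  intro x y p
  induction p with
  | nil => intro hx hy; exact absurd hy hx
  | @cons x w y hadj q ih =>
    intro hx hy
    by_cases hw : P w
    · exact ⟨x, w, hx, hw, by simp⟩
    · obtain ⟨a, b, ha, hb, hmem⟩ := ih hw hy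
      exact ⟨a, b, ha, hb, by simp [hmem]⟩

/-- The cut with `c_{t+1}` on the right side. -/
def PA (m : ℕ) (t : Fin m) : Fin (m + 1) ⊕ Fin m → Prop :=
  Sum.elim (fun a => (t : ℕ) < a) (fun j => (t : ℕ) ≤ j)

/-- The cut with `c_{t+1}` on the left side. -/
def PB (m : ℕ) (t : Fin m) : Fin (m + 1) ⊕ Fin m → Prop :=
  Sum.elim (fun a => (t : ℕ) < a) (fun j => (t : ℕ) < j)

lemma crossA_classify (t : Fin m) {a b : Fin (m + 1) ⊕ Fin m}
    (hadj : (triChain m).Adj a b) (ha : ¬ PA m t a) (hb : PA m t b) :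
    s(a, b) = topE m t ∨ s(a, b) = botL m t := by
  rcases a with i | i <;> rcases b with j | j
  · have hadj' : (i : ℕ) + 1 = j ∨ (j : ℕ) + 1 = i := hadj
    simp only [PA, Sum.elim_inl, not_lt] at ha hb
    left
    have hi : i = t.castSucc := Fin.ext (by simp; omega)
    have hj : j = t.succ := Fin.ext (by simp; omega)
    rw [hi, hj]; rfl
  · have hadj' : (i : ℕ) = j ∨ (i : ℕ) = (j : ℕ) + 1 := hadj
    simp only [PA, Sum.elim_inl, Sum.elim_inr, not_lt] at ha hb
    right
    have hi : i = t.castSucc := Fin.ext (by simp; omega)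
    have hj : j = t := Fin.ext (by omega)
    rw [hi, hj]; rfl
  · have hadj' : (j : ℕ) = i ∨ (j : ℕ) = (i : ℕ) + 1 := hadj
    simp only [PA, Sum.elim_inl, Sum.elim_inr, not_le] at ha hb
    omega
  · exact absurd hadj (by simp [triChain])

lemma crossB_classify (t : Fin m) {a b : Fin (m + 1) ⊕ Fin m}
    (hadj : (triChain m).Adj a b) (ha : ¬ PB m t a) (hb : PB m t b) :
    s(a, b) = topE m t ∨ s(a, b) = botR m t := by
  rcases a with i | i <;> rcases b with j | j
  · have hadj' : (i : ℕ) + 1 = j ∨ (j : ℕ) + 1 = i := hadj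
    simp only [PB, Sum.elim_inl, not_lt] at ha hb
    left
    have hi : i = t.castSucc := Fin.ext (by simp; omega)
    have hj : j = t.succ := Fin.ext (by simp; omega)
    rw [hi, hj]; rfl
  · have hadj' : (i : ℕ) = j ∨ (i : ℕ) = (j : ℕ) + 1 := hadj
    simp only [PB, Sum.elim_inl, Sum.elim_inr, not_lt] at ha hb
    omega
  · have hadj' : (j : ℕ) = i ∨ (j : ℕ) = (i : ℕ) + 1 := hadj
    simp only [PB, Sum.elim_inl, Sum.elim_inr, not_lt] at ha hb
    right
    have hi : i = t := Fin.ext (by omega)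
    have hj : j = t.succ := Fin.ext (by simp; omega)
    rw [hi, hj]; rfl
  · exact absurd hadj (by simp [triChain])

end Aux

/-- if two walks in `∇ (2ℓ)` from `u_0` to `u_{2ℓ}` respect unit capacities and
each is a concatenation of at most `k + 1` geodesics, then `k ≥ ℓ`. -/
theorem stmt3 (ℓ k : ℕ) (hℓ : 1 ≤ ℓ)
    (W₁ W₂ : (triChain (2 * ℓ)).Walk (Sum.inl 0) (Sum.inl (Fin.last (2 * ℓ))))
    (hcap : ∀ e : Sym2 (Fin (2 * ℓ + 1) ⊕ Fin (2 * ℓ)),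
      cnt e W₁.edges + cnt e W₂.edges ≤ 1)
    (h₁ : ∃ j ≤ k + 1, ConcatGeo (triChain (2 * ℓ)) j W₁)
    (h₂ : ∃ j ≤ k + 1, ConcatGeo (triChain (2 * ℓ)) j W₂) :
    ℓ ≤ k := by
  have cross : ∀ (W : (triChain (2 * ℓ)).Walk (Sum.inl 0) (Sum.inl (Fin.last (2 * ℓ))))
      (t : Fin (2 * ℓ)),
      (topE (2 * ℓ) t ∈ W.edges ∨ botL (2 * ℓ) t ∈ W.edges) ∧
      (topE (2 * ℓ) t ∈ W.edges ∨ botR (2 * ℓ) t ∈ W.edges) := by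
    intro W t
    constructor
    · obtain ⟨a, b, ha, hb, hmem⟩ := exists_cross (PA (2 * ℓ) t) W
        (by simp [PA]) (by simp [PA, Fin.val_last])
      have hadj := W.adj_of_mem_edges hmem
      rcases crossA_classify t hadj ha hb with h | h
      · left; rwa [← h]
      · right; rwa [← h]
    · obtain ⟨a, b, ha, hb, hmem⟩ := exists_cross (PB (2 * ℓ) t) W
        (by simp [PB]) (by simp [PB, Fin.val_last])
      have hadj := W.adj_of_mem_edges hmem
      rcases crossB_classify t hadj ha hb with h | h
      · left; rwa [← h]
      · right; rwa [← h]
  have key : ∀ t : Fin (2 * ℓ),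
      2 ≤ (cnt (botL (2 * ℓ) t) W₁.edges + cnt (botR (2 * ℓ) t) W₁.edges) +
          (cnt (botL (2 * ℓ) t) W₂.edges + cnt (botR (2 * ℓ) t) W₂.edges) := by
    intro t
    obtain ⟨hA1, hB1⟩ := cross W₁ t
    obtain ⟨hA2, hB2⟩ := cross W₂ t
    have hcapT := hcap (topE (2 * ℓ) t)
    have hnot : topE (2 * ℓ) t ∉ W₁.edges ∨ topE (2 * ℓ) t ∉ W₂.edges := by
      by_contra h
      push_neg at h
      have c1 := cnt_pos_of_mem h.1
      have c2 := cnt_pos_of_mem h.2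
      omega
    rcases hnot with h | h
    · have c1 := cnt_pos_of_mem (hA1.resolve_left h)
      have c2 := cnt_pos_of_mem (hB1.resolve_left h)
      omega
    · have c1 := cnt_pos_of_mem (hA2.resolve_left h)
      have c2 := cnt_pos_of_mem (hB2.resolve_left h)
      omega
  have hsum : 2 * (2 * ℓ) ≤ bcount (2 * ℓ) W₁.edges + bcount (2 * ℓ) W₂.edges := by
    have h := Finset.sum_le_sum (fun t (_ : t ∈ Finset.univ) => key t)
    rw [Finset.sum_const, Finset.card_univ, Fintype.card_fin, smul_eq_mul,
      Finset.sum_add_distrib] at h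
    unfold bcount
    omega
  have main : ∀ (W : (triChain (2 * ℓ)).Walk (Sum.inl 0) (Sum.inl (Fin.last (2 * ℓ)))),
      (∃ j ≤ k + 1, ConcatGeo (triChain (2 * ℓ)) j W) →
      2 * ℓ ≤ bcount (2 * ℓ) W.edges → ℓ ≤ k := by
    rintro W ⟨j, hj, hc⟩ hB
    rcases concat_bound hc with h | ⟨h0, _⟩
    · simp only [eps] at h
      omega
    · omega
  have hcase : 2 * ℓ ≤ bcount (2 * ℓ) W₁.edges ∨ 2 * ℓ ≤ bcount (2 * ℓ) W₂.edges := by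
    omega
  rcases hcase with h | h
  · exact main W₁ h₁ h
  · exact main W₂ h₂ h
end

section
/- Let m ≥ 1. In the triangle chain ∇_m, the graph distance between u_0 and u_m equals m, and the path u_0 u_1 ⋯ u_m through the top edges is the unique shortest path from u_0 to u_m. -/
/-- Potential function: `2i` on top vertex `u_i`, `2j+1` on bottom vertex `c_{j+1}`. -/
def triF (m : ℕ) : Fin (m + 1) ⊕ Fin m → ℕ
  | Sum.inl i => 2 * (i : ℕ)
  | Sum.inr j => 2 * (j : ℕ) + 1

lemma triF_adj {m : ℕ} {x y : Fin (m + 1) ⊕ Fin m} (h : (triChain m).Adj x y) :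
    triF m y ≤ triF m x + 2 := by
  rcases x with i | i <;> rcases y with j | j <;>
    simp only [triChain, triF] at h ⊢ <;> omega

lemma triF_walk {m : ℕ} {x y : Fin (m + 1) ⊕ Fin m} (p : (triChain m).Walk x y) :
    triF m y ≤ triF m x + 2 * p.length := by
  induction p with
  | nil => simp
  | cons h q ih =>
    have := triF_adj h
    simp only [SimpleGraph.Walk.length_cons]
    omega

/-- The top path exists. -/
lemma tri_exists (m : ℕ) : ∀ (k : ℕ) (i : Fin (m + 1)), (i : ℕ) + k = m →
    ∃ p : (triChain m).Walk (Sum.inl i) (Sum.inl (Fin.last m)), p.length = k := by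
  intro k
  induction k with
  | zero =>
    intro i hi
    have : i = Fin.last m := by
      ext; simpa using hi
    subst this
    exact ⟨SimpleGraph.Walk.nil, rfl⟩
  | succ k ih =>
    intro i hi
    have hlt : (i : ℕ) + 1 < m + 1 := by omega
    have hadj : (triChain m).Adj (Sum.inl i) (Sum.inl ⟨(i : ℕ) + 1, hlt⟩) := by
      simp [triChain]
    obtain ⟨q, hq⟩ := ih ⟨(i : ℕ) + 1, hlt⟩ (by simp only [Fin.val_mk]; omega)
    exact ⟨SimpleGraph.Walk.cons hadj q, by simp [hq]⟩

/-- Uniqueness of the shortest walk: its support is the top vertices in order. -/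
lemma tri_unique (m : ℕ) : ∀ (k : ℕ) (i : Fin (m + 1)), (i : ℕ) + k = m →
    ∀ p : (triChain m).Walk (Sum.inl i) (Sum.inl (Fin.last m)), p.length = k →
    p.support = ((List.finRange (m + 1)).drop i).map Sum.inl := by
  intro k
  induction k with
  | zero =>
    intro i hi p hp
    have hi' : i = Fin.last m := by ext; simpa using hi
    subst hi'
    cases p with
    | nil =>
      have hdrop : (List.finRange (m + 1)).drop m = [Fin.last m] := by
        have h1 : m < (List.finRange (m + 1)).length := by simp
        rw [List.drop_eq_getElem_cons h1, List.getElem_finRange,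
          List.drop_eq_nil_of_le (by simp)]
        congr 1
      rw [Fin.val_last, hdrop]
      rfl
    | cons h q => simp at hp
  | succ k ih =>
    intro i hi p hp
    cases p with
    | nil => simp at hp
    | @cons _ v _ h q =>
      have hq : q.length = k := by simpa using hp
      have hbound := triF_walk q
      rw [hq] at hbound
      have hF : triF m (Sum.inl (Fin.last m)) = 2 * m := by simp [triF]
      rw [hF] at hbound
      -- identify v = inl (i+1)
      have hlt : (i : ℕ) + 1 < m + 1 := by omega
      have hv : v = Sum.inl ⟨(i : ℕ) + 1, hlt⟩ := by
        rcases v with j | j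
        · have hadj : ((i : ℕ) + 1 = j ∨ (j : ℕ) + 1 = i) := h
          have hFv : triF m (Sum.inl j) = 2 * (j : ℕ) := rfl
          rw [hFv] at hbound
          have : (j : ℕ) = (i : ℕ) + 1 := by omega
          congr 1
          ext
          simpa using this
        · have hFv : triF m (Sum.inr j) = 2 * (j : ℕ) + 1 := rfl
          rw [hFv] at hbound
          have hadj : ((i : ℕ) = j ∨ (i : ℕ) = (j : ℕ) + 1) := h
          omega
      subst hv
      have hsup := ih ⟨(i : ℕ) + 1, hlt⟩ (by show (i : ℕ) + 1 + k = m; omega) q hq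
      have hdrop : (List.finRange (m + 1)).drop i
          = i :: (List.finRange (m + 1)).drop ((i : ℕ) + 1) := by
        have h1 : (i : ℕ) < (List.finRange (m + 1)).length := by simpa using i.isLt
        rw [List.drop_eq_getElem_cons h1, List.getElem_finRange]
        congr 1
      rw [SimpleGraph.Walk.support_cons, hsup, hdrop]
      simp

/-- in `∇ m` (with `m ≥ 1`), the distance from `u_0` to `u_m` is `m`, the top
path `u_0 u_1 ⋯ u_m` is a shortest path from `u_0` to `u_m`, and it is the unique such
shortest path (any walk of length `m` from `u_0` to `u_m` has exactly the top vertices, in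
order, as its support). -/
theorem stmt4 (m : ℕ) (hm : 1 ≤ m) :
    (triChain m).dist (Sum.inl 0) (Sum.inl (Fin.last m)) = m ∧
    (∃ p : (triChain m).Walk (Sum.inl 0) (Sum.inl (Fin.last m)),
      p.length = m ∧ p.support = (List.finRange (m + 1)).map Sum.inl) ∧
    (∀ p : (triChain m).Walk (Sum.inl 0) (Sum.inl (Fin.last m)),
      p.length = m → p.support = (List.finRange (m + 1)).map Sum.inl) := by
  obtain ⟨p₀, hp₀⟩ := tri_exists m m 0 (by simp)
  have huniq : ∀ p : (triChain m).Walk (Sum.inl 0) (Sum.inl (Fin.last m)),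
      p.length = m → p.support = (List.finRange (m + 1)).map Sum.inl := by
    intro p hp
    have := tri_unique m m 0 (by simp) p hp
    simpa using this
  have hub := SimpleGraph.dist_le p₀
  rw [hp₀] at hub
  have hr : (triChain m).Reachable (Sum.inl 0) (Sum.inl (Fin.last m)) := ⟨p₀⟩
  obtain ⟨q, hq⟩ := hr.exists_walk_length_eq_dist
  have hlb := triF_walk q
  have h0 : triF m (Sum.inl (0 : Fin (m + 1))) = 0 := by simp [triF]
  have h1 : triF m (Sum.inl (Fin.last m)) = 2 * m := by simp [triF]
  rw [h0, h1, hq] at hlb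
  refine ⟨by omega, ⟨p₀, hp₀, huniq p₀ hp₀⟩, huniq⟩
end

section
/- Let C be a cycle graph on n ≥ 3 vertices and let (s_1,t_1), …, (s_d,t_d) with d ≥ 3 be pairs of vertices of C with s_i ≠ t_i for every i. Then there exist pairwise edge-disjoint paths P_1, …, P_d in C with P_i joining s_i and t_i if and only if both of the following hold: (i) {s_i, t_i} ≠ {s_j, t_j} for all i ≠ j; (ii) for every i, at least one of the two s_i–t_i arcs of C has no internal vertex equal to some s_j or t_j with j ≠ i. -/
open SimpleGraph


open SimpleGraph

section WalkLemmas
variable {V : Type*} {G : SimpleGraph V}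

lemma walk_edges_eq {x y : V} (W : G.Walk x y) :
    W.edges = (List.range W.length).map (fun i => s(W.getVert i, W.getVert (i+1))) := by
  induction W with
  | nil => rfl
  | cons h p ih =>
    rename_i u v w
    have key : (List.range (p.length + 1)).map
        (fun i => s((Walk.cons h p).getVert i, (Walk.cons h p).getVert (i+1)))
        = s(u, v) :: (List.range p.length).map (fun i => s(p.getVert i, p.getVert (i+1))) := by
      rw [List.range_succ_eq_map, List.map_cons, List.map_map]
      congr 1
      all_goals first
        | (apply List.map_congr_left; intro i _; simp [Function.comp, Walk.getVert_cons_succ])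
        | simp [Walk.getVert_cons_succ]
    rw [Walk.edges_cons, ih, Walk.length_cons, key]

lemma walk_support_eq {x y : V} (W : G.Walk x y) :
    W.support = (List.range (W.length+1)).map W.getVert := by
  induction W with
  | nil => rfl
  | cons h p ih =>
    rename_i u v w
    have key : (List.range (p.length + 1 + 1)).map (Walk.cons h p).getVert
        = u :: (List.range (p.length + 1)).map p.getVert := by
      rw [List.range_succ_eq_map, List.map_cons, List.map_map]
      congr 1
      all_goals first
        | (apply List.map_congr_left; intro i _; simp [Function.comp, Walk.getVert_cons_succ])
        | simp [Walk.getVert_cons_succ]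
    rw [Walk.support_cons, ih, Walk.length_cons, key]

lemma mem_internal_iff {x y : V} (W : G.Walk x y) (v : V) :
    v ∈ W.support.tail.dropLast ↔ ∃ i, 0 < i ∧ i < W.length ∧ W.getVert i = v := by
  rw [walk_support_eq, List.range_succ_eq_map, List.map_cons, List.tail_cons,
    List.map_map, ← List.map_dropLast]
  have hdl : (List.range W.length).dropLast = List.range (W.length - 1) := by
    cases hL : W.length with
    | zero => rfl
    | succ m => rw [List.range_succ, List.dropLast_concat]; simp
  rw [hdl, List.mem_map]
  constructor
  · rintro ⟨i, hi, rfl⟩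
    rw [List.mem_range] at hi
    exact ⟨i+1, by omega, by omega, rfl⟩
  · rintro ⟨i, h0, hL, rfl⟩
    refine ⟨i-1, by rw [List.mem_range]; omega, ?_⟩
    simp only [Function.comp]
    congr 1
    omega

end WalkLemmas

section ZH
variable {n : ℕ} [NeZero n]


section ZHelpers
variable {n : ℕ} [NeZero n]

lemma zsub_one_val {z : ZMod n} (hz : z ≠ 0) : (z - 1).val = z.val - 1 ∧ 1 ≤ z.val := by
  have h1 : 1 ≤ z.val := by
    rcases Nat.eq_zero_or_pos z.val with h | h
    · exact absurd ((ZMod.val_eq_zero z).mp h) hz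
    · exact h
  refine ⟨?_, h1⟩
  have : z - 1 = ((z.val - 1 : ℕ) : ZMod n) := by
    push_cast [Nat.cast_sub h1, ZMod.natCast_zmod_val]
    ring
  rw [this, ZMod.val_cast_of_lt (by have := ZMod.val_lt z; omega)]

lemma zadd_one_val {z : ZMod n} (hz : z.val + 1 < n) : (z + 1).val = z.val + 1 := by
  have hone : (1 : ZMod n).val = 1 := ZMod.val_one_eq_one_mod n ▸ Nat.mod_eq_of_lt (by omega)
  rw [ZMod.val_add_of_lt (by omega), hone]

lemma zsub_nat_val {z : ZMod n} {k : ℕ} (hk : k ≤ z.val) : (z - k).val = z.val - k := by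
  have : z - k = ((z.val - k : ℕ) : ZMod n) := by
    push_cast [Nat.cast_sub hk, ZMod.natCast_zmod_val]
    ring
  rw [this, ZMod.val_cast_of_lt (by have := ZMod.val_lt z; omega)]

lemma zadd_nat_val {z : ZMod n} {k : ℕ} (hk : z.val + k < n) : (z + k).val = z.val + k := by
  have : z + k = ((z.val + k : ℕ) : ZMod n) := by
    push_cast [ZMod.natCast_zmod_val]
    ring
  rw [this, ZMod.val_cast_of_lt hk]

lemma zeq_of_val_sub_eq {a v w : ZMod n} (h : (v - a).val = (w - a).val) : v = w := by
  have h1 := ZMod.natCast_zmod_val (v - a)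
  have h2 := ZMod.natCast_zmod_val (w - a)
  rw [h] at h1
  have := h1.symm.trans h2
  linear_combination this

lemma zself_add_val {a : ZMod n} {j : ℕ} (hj : j < n) : ((a + j) - a).val = j := by
  have : a + j - a = (j : ZMod n) := by ring
  rw [this, ZMod.val_cast_of_lt hj]

end ZHelpers

end ZH




/-- The cycle graph on `n` vertices (for `n ≥ 3`), with vertex set `ZMod n` and
`x` adjacent to `y` iff they are distinct and differ by `1`. -/
def cycleG (n : ℕ) : SimpleGraph (ZMod n) where
  Adj x y := x ≠ y ∧ (y = x + 1 ∨ x = y + 1)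
  symm := by
    constructor
    rintro x y ⟨h, h'⟩
    exact ⟨h.symm, Or.symm h'⟩
  loopless := by
    constructor
    rintro x ⟨h, -⟩
    exact h rfl

lemma path_dir {n : ℕ} (hn : 3 ≤ n) {x y : ZMod n} (W : (cycleG n).Walk x y)
    (hW : W.IsPath) :
    (∀ i ≤ W.length, W.getVert i = x + (i : ZMod n)) ∨
    (∀ i ≤ W.length, W.getVert i = x - (i : ZMod n)) := by
  induction W with
  | nil =>
    left
    intro i hi
    simp only [Walk.length_nil, Nat.le_zero] at hi
    subst hi
    simp
  | cons h p ih =>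
    rename_i u v w
    rw [Walk.cons_isPath_iff] at hW
    obtain ⟨hp, hu⟩ := hW
    have hlen1 : ∀ (hv : v = u + 1), (∀ i ≤ p.length, p.getVert i = v + (i : ZMod n)) →
        (∀ i ≤ (Walk.cons h p).length, (Walk.cons h p).getVert i = u + (i : ZMod n)) := by
      intro hv hfwd i hi
      cases i with
      | zero => simp
      | succ j =>
        rw [Walk.getVert_cons_succ, hfwd j (by simpa [Walk.length_cons] using hi), hv]
        push_cast
        ring
    have hlen2 : ∀ (hv : u = v + 1), (∀ i ≤ p.length, p.getVert i = v - (i : ZMod n)) →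
        (∀ i ≤ (Walk.cons h p).length, (Walk.cons h p).getVert i = u - (i : ZMod n)) := by
      intro hv hbwd i hi
      cases i with
      | zero => simp
      | succ j =>
        rw [Walk.getVert_cons_succ, hbwd j (by simpa [Walk.length_cons] using hi), hv]
        push_cast
        ring
    rcases h.2 with hv | hv
    · -- v = u + 1 : forward
      left
      rcases ih hp with hfwd | hbwd
      · exact hlen1 hv hfwd
      · -- p goes backward; must have p.length = 0
        rcases Nat.eq_zero_or_pos p.length with h0 | h0
        · refine hlen1 hv (fun i hi => ?_)
          have hi0 : i = 0 := by omega
          subst hi0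
          simp
        · exfalso
          apply hu
          have : p.getVert 1 = u := by
            rw [hbwd 1 (by omega), hv]
            push_cast
            ring
          rw [← this]
          rw [Walk.mem_support_iff_exists_getVert]
          exact ⟨1, rfl, by omega⟩
    · -- u = v + 1 : backward
      right
      rcases ih hp with hfwd | hbwd
      · rcases Nat.eq_zero_or_pos p.length with h0 | h0
        · refine hlen2 hv (fun i hi => ?_)
          have hi0 : i = 0 := by omega
          subst hi0
          simp
        · exfalso
          apply hu
          have : p.getVert 1 = u := by
            rw [hfwd 1 (by omega), hv]
            push_cast
            ring
          rw [← this]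
          rw [Walk.mem_support_iff_exists_getVert]
          exact ⟨1, rfl, by omega⟩
      · exact hlen2 hv hbwd

lemma arc_desc {n : ℕ} (hn : 3 ≤ n) {x y : ZMod n} (hxy : x ≠ y)
    (W : (cycleG n).Walk x y) (hW : W.IsPath) :
    ∃ (a : ZMod n) (k : ℕ), 1 ≤ k ∧ k < n ∧
      s(x, y) = s(a, a + (k : ZMod n)) ∧
      (∀ e, e ∈ W.edges ↔ ∃ j < k, e = s(a + (j : ZMod n), a + (j : ZMod n) + 1)) ∧
      (∀ v, v ∈ W.support.tail.dropLast ↔ ∃ j, 0 < j ∧ j < k ∧ v = a + (j : ZMod n)) := by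
  haveI : NeZero n := ⟨by omega⟩
  set k := W.length with hk
  have hkn : k < n := by
    have := hW.length_lt
    rwa [ZMod.card n] at this
  have hy : W.getVert k = y := W.getVert_length
  rcases path_dir hn W hW with hdir | hdir
  · -- forward
    have hk1 : 1 ≤ k := by
      rcases Nat.eq_zero_or_pos k with h0 | h0
      · exfalso
        apply hxy
        rw [← hy, hdir k le_rfl, h0]
        simp
      · exact h0
    refine ⟨x, k, hk1, hkn, ?_, ?_, ?_⟩
    · rw [← hy, hdir k le_rfl]
    · intro e
      rw [walk_edges_eq W, List.mem_map]
      constructor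
      · rintro ⟨i, hi, rfl⟩
        rw [List.mem_range] at hi
        refine ⟨i, hi, ?_⟩
        rw [hdir i (by omega), hdir (i+1) (by omega)]
        push_cast
        ring_nf
      · rintro ⟨j, hj, rfl⟩
        refine ⟨j, by rw [List.mem_range]; exact hj, ?_⟩
        rw [hdir j (by omega), hdir (j+1) (by omega)]
        push_cast
        ring_nf
    · intro v
      rw [mem_internal_iff]
      constructor
      · rintro ⟨i, h0, hik, rfl⟩
        exact ⟨i, h0, hik, (hdir i (by omega)).symm ▸ rfl⟩
      · rintro ⟨j, h0, hjk, rfl⟩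
        exact ⟨j, h0, hjk, by rw [hdir j (by omega)]⟩
  · -- backward
    have hk1 : 1 ≤ k := by
      rcases Nat.eq_zero_or_pos k with h0 | h0
      · exfalso
        apply hxy
        rw [← hy, hdir k le_rfl, h0]
        simp
      · exact h0
    have hxa : y = x - (k : ZMod n) := by rw [← hy, hdir k le_rfl]
    have hx : x = y + (k : ZMod n) := by rw [hxa]; ring
    refine ⟨y, k, hk1, hkn, ?_, ?_, ?_⟩
    · rw [← hx, Sym2.eq_swap]
    · intro e
      rw [walk_edges_eq W, List.mem_map]
      constructor
      · rintro ⟨i, hi, rfl⟩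
        rw [List.mem_range] at hi
        refine ⟨k - 1 - i, by omega, ?_⟩
        rw [hdir i (by omega), hdir (i+1) (by omega)]
        have f1 : x - ((i:ℕ) : ZMod n) = y + ((k - 1 - i : ℕ) : ZMod n) + 1 := by
          rw [show (k - 1 - i : ℕ) = k - (1+i) by omega, Nat.cast_sub (by omega : 1+i ≤ k), hx]
          push_cast
          ring
        have f2 : x - ((i + 1 : ℕ) : ZMod n) = y + ((k - 1 - i : ℕ) : ZMod n) := by
          rw [show (k - 1 - i : ℕ) = k - (1+i) by omega, Nat.cast_sub (by omega : 1+i ≤ k), hx]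
          push_cast
          ring
        rw [f1, f2, Sym2.eq_swap]
      · rintro ⟨j, hj, rfl⟩
        refine ⟨k - 1 - j, by rw [List.mem_range]; omega, ?_⟩
        rw [hdir (k-1-j) (by omega), hdir (k-1-j+1) (by omega)]
        have f1 : x - ((k - 1 - j : ℕ) : ZMod n) = y + ((j:ℕ) : ZMod n) + 1 := by
          rw [show (k - 1 - j : ℕ) = k - (1+j) by omega, Nat.cast_sub (by omega : 1+j ≤ k), hx]
          push_cast
          ring
        have f2 : x - ((k - 1 - j + 1 : ℕ) : ZMod n) = y + ((j:ℕ) : ZMod n) := by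
          rw [show (k - 1 - j + 1 : ℕ) = k - j by omega, Nat.cast_sub (by omega : j ≤ k), hx]
          push_cast
          ring
        rw [f1, f2, Sym2.eq_swap]
    · intro v
      rw [mem_internal_iff]
      constructor
      · rintro ⟨i, h0, hik, rfl⟩
        refine ⟨k - i, by omega, by omega, ?_⟩
        rw [hdir i (by omega), Nat.cast_sub (by omega : i ≤ k), hx]
        ring
      · rintro ⟨j, h0, hjk, rfl⟩
        refine ⟨k - j, by omega, by omega, ?_⟩
        rw [hdir (k-j) (by omega), Nat.cast_sub (by omega : j ≤ k), hx]
        ring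

section Z
variable {n : ℕ} [NeZero n]
lemma coreCf (a b : ZMod n) (k l : ℕ) (hkn : k < n) (hln : l < n)
    (Hi : ∀ v : ZMod n, 0 < (v - a).val → (v - a).val < k → v ≠ b ∧ v ≠ b + (l : ZMod n))
    (e : ZMod n) (hea : (e - a).val < k) (heb : (e - b).val < l) :
    ∀ m, (e - a).val + m < k →
      (e + (m : ZMod n) - a).val = (e - a).val + m ∧
      (e + (m : ZMod n) - b).val = (e - b).val + m ∧
      (e - b).val + m < l := by
  intro m
  induction m with
  | zero =>
    intro _
    refine ⟨by push_cast; ring_nf, by push_cast; ring_nf, by omega⟩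
  | succ m ih =>
    intro h
    obtain ⟨h1, h2, h3⟩ := ih (by omega)
    have hfa : (e + (m : ZMod n) + 1 - a).val = (e - a).val + m + 1 := by
      have hr : e + (m : ZMod n) + 1 - a = (e + (m : ZMod n) - a) + 1 := by ring
      rw [hr, zadd_one_val (by rw [h1]; omega), h1]
    have hfb : (e + (m : ZMod n) + 1 - b).val = (e - b).val + m + 1 := by
      have hr : e + (m : ZMod n) + 1 - b = (e + (m : ZMod n) - b) + 1 := by ring
      rw [hr, zadd_one_val (by rw [h2]; omega), h2]
    have hcast : e + ((m + 1 : ℕ) : ZMod n) = e + (m : ZMod n) + 1 := by push_cast; ring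
    have hHi := Hi (e + (m : ZMod n) + 1) (by rw [hfa]; omega) (by rw [hfa]; omega)
    have hne : (e - b).val + m + 1 ≠ l := by
      intro hl
      apply hHi.2
      have hv : e + (m : ZMod n) + 1 = b + (((e + (m : ZMod n) + 1 - b).val : ℕ) : ZMod n) := by
        rw [ZMod.natCast_zmod_val]; ring
      rw [hv, hfb, hl]
    refine ⟨?_, ?_, by omega⟩
    · rw [hcast, hfa]
      omega
    · rw [hcast, hfb]
      omega

lemma coreCb (a b : ZMod n) (k l : ℕ) (hkn : k < n) (hln : l < n)
    (Hi : ∀ v : ZMod n, 0 < (v - a).val → (v - a).val < k → v ≠ b ∧ v ≠ b + (l : ZMod n))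
    (e : ZMod n) (hea : (e - a).val < k) (heb : (e - b).val < l) :
    ∀ m, m ≤ (e - a).val →
      (e - (m : ZMod n) - a).val = (e - a).val - m ∧ m ≤ (e - b).val ∧
      (e - (m : ZMod n) - b).val = (e - b).val - m := by
  intro m
  induction m with
  | zero =>
    intro _
    refine ⟨by push_cast; simp, by omega, by push_cast; simp⟩
  | succ m ih =>
    intro h
    obtain ⟨h1, h2, h3⟩ := ih (by omega)
    have hfa0 : 0 < (e - (m : ZMod n) - a).val := by omega
    have hfak : (e - (m : ZMod n) - a).val < k := by omega
    have hHi := Hi (e - (m : ZMod n)) hfa0 hfak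
    have hfbne : e - (m : ZMod n) - b ≠ 0 := sub_ne_zero.mpr hHi.1
    have hfane : e - (m : ZMod n) - a ≠ 0 := by
      intro h0
      rw [h0] at hfa0
      simp at hfa0
    obtain ⟨hb1, hb2⟩ := zsub_one_val hfbne
    obtain ⟨ha1, ha2⟩ := zsub_one_val hfane
    have hcast : e - ((m + 1 : ℕ) : ZMod n) = e - (m : ZMod n) - 1 := by push_cast; ring
    have hra : e - (m : ZMod n) - 1 - a = (e - (m : ZMod n) - a) - 1 := by ring
    have hrb : e - (m : ZMod n) - 1 - b = (e - (m : ZMod n) - b) - 1 := by ring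
    refine ⟨?_, by omega, ?_⟩
    · rw [hcast, hra, ha1, h1]
      omega
    · rw [hcast, hrb, hb1, h3]
      omega

lemma core (hn : 3 ≤ n) (a b : ZMod n) (k l : ℕ)
    (hk1 : 1 ≤ k) (hkn : k < n) (hl1 : 1 ≤ l) (hln : l < n)
    (Hi : ∀ v : ZMod n, 0 < (v - a).val → (v - a).val < k → v ≠ b ∧ v ≠ b + (l : ZMod n))
    (Hj : ∀ v : ZMod n, 0 < (v - b).val → (v - b).val < l → v ≠ a ∧ v ≠ a + (k : ZMod n))
    (Hne : s(a, a + (k : ZMod n)) ≠ s(b, b + (l : ZMod n)))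
    (e : ZMod n) (hea : (e - a).val < k) (heb : (e - b).val < l) : False := by
  -- forward comparison
  have hf1 := coreCf a b k l hkn hln Hi e hea heb (k - 1 - (e - a).val) (by omega)
  have hf2 := coreCf b a l k hln hkn Hj e heb hea (l - 1 - (e - b).val) (by omega)
  have hA : k - (e - a).val = l - (e - b).val := by omega
  have hb1 := coreCb a b k l hkn hln Hi e hea heb ((e - a).val) le_rfl
  have hb2 := coreCb b a l k hln hkn Hj e heb hea ((e - b).val) le_rfl
  have hpe : (e - a).val = (e - b).val := by omega
  have hkl : k = l := by omega
  have hab : a = b := by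
    have h1 : e = a + (((e - a).val : ℕ) : ZMod n) := by rw [ZMod.natCast_zmod_val]; ring
    have h2 : e = b + (((e - b).val : ℕ) : ZMod n) := by rw [ZMod.natCast_zmod_val]; ring
    rw [hpe] at h1
    have := h1.symm.trans h2
    exact add_right_cancel this
  exact Hne (by rw [hab, hkl])

lemma cover (a : ZMod n) (k l : ℕ) (hkl : k + l = n) (x : ZMod n)
    (hx : ¬ (x - a).val < k) : (x - (a + (k : ZMod n))).val < l := by
  have h1 : (x - a).val < n := ZMod.val_lt _
  have hr : x - (a + (k : ZMod n)) = (x - a) - (k : ZMod n) := by ring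
  rw [hr, zsub_nat_val (by omega)]
  omega


lemma edge_lab_inj {n : ℕ} (hn : 3 ≤ n) {u w : ZMod n} (h : s(u, u+1) = s(w, w+1)) : u = w := by
  haveI : NeZero n := ⟨by omega⟩
  rw [Sym2.eq_iff] at h
  rcases h with ⟨h1, -⟩ | ⟨h1, h2⟩
  · exact h1
  · exfalso
    have h20 : ((2 : ℕ) : ZMod n) = 0 := by
      push_cast
      linear_combination h2 - h1
    rw [ZMod.natCast_eq_zero_iff] at h20
    have := Nat.le_of_dvd (by omega) h20
    omega


end Z

/-- on a cycle `C` with `n ≥ 3` vertices and `d ≥ 3` demands `(s_i, t_i)` with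
`s_i ≠ t_i`, there exist pairwise edge-disjoint paths `P_i` joining `s_i` and `t_i` iff
(i) the unordered pairs `{s_i, t_i}` are pairwise distinct, and (ii) for every `i` at least
one of the two `s_i`–`t_i` arcs of `C` (equivalently: at least one `s_i`–`t_i` path in `C`)
has no internal vertex equal to some terminal `s_j` or `t_j` with `j ≠ i`. -/
theorem stmt6 (n : ℕ) (hn : 3 ≤ n) (d : ℕ) (hd : 3 ≤ d)
    (s t : Fin d → ZMod n) (hst : ∀ i, s i ≠ t i) :
    (∃ P : ∀ i, (cycleG n).Walk (s i) (t i),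
      (∀ i, (P i).IsPath) ∧
      (∀ i j, i ≠ j → ∀ e, e ∈ (P i).edges → e ∉ (P j).edges)) ↔
    ((∀ i j, i ≠ j → s(s i, t i) ≠ s(s j, t j)) ∧
      (∀ i, ∃ Q : (cycleG n).Walk (s i) (t i), Q.IsPath ∧
        ∀ j, j ≠ i →
          s j ∉ Q.support.tail.dropLast ∧ t j ∉ Q.support.tail.dropLast)) := by
  haveI : NeZero n := ⟨by omega⟩
  constructor
  · rintro ⟨P, hpath, hdisj⟩
    choose a k hk1 hkn hsym hedge hintl using fun i => arc_desc hn (hst i) (P i) (hpath i)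
    have memEdge : ∀ i (v : ZMod n), (v - a i).val < k i → s(v, v+1) ∈ (P i).edges := by
      intro i v hv
      rw [hedge i]
      refine ⟨(v - a i).val, hv, ?_⟩
      have hva : a i + (((v - a i).val : ℕ) : ZMod n) = v := by
        rw [ZMod.natCast_zmod_val]
        ring
      rw [hva]
    have hself : ∀ i, (a i - a i).val = 0 := by
      intro i
      rw [sub_self, ZMod.val_zero]
    constructor
    · intro i j hij hcon
      have hsij : s(a i, a i + (k i : ZMod n)) = s(a j, a j + (k j : ZMod n)) := by
        rw [← hsym i, ← hsym j, hcon]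
      rw [Sym2.eq_iff] at hsij
      rcases hsij with ⟨hai, hki⟩ | ⟨hai, hki⟩
      · -- same start: share edge at a i
        have e1 : s(a i, a i + 1) ∈ (P i).edges := memEdge i (a i) (by rw [hself i]; exact hk1 i)
        have e2 : s(a i, a i + 1) ∈ (P j).edges :=
          memEdge j (a i) (by rw [hai, hself j]; exact hk1 j)
        exact hdisj i j hij _ e1 e2
      · -- opposite arcs: they cover everything, contradiction with a third demand
        obtain ⟨m, hmi, hmj⟩ : ∃ m : Fin d, m ≠ i ∧ m ≠ j := by
          by_contra hcon2
          push_neg at hcon2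
          have hsub : (Finset.univ : Finset (Fin d)) ⊆ {i, j} := by
            intro m _
            simp only [Finset.mem_insert, Finset.mem_singleton]
            rcases eq_or_ne m i with h | h
            · exact Or.inl h
            · exact Or.inr (hcon2 m h)
          have hcard := Finset.card_le_card hsub
          have h2 : ({i, j} : Finset (Fin d)).card ≤ 2 :=
            (Finset.card_insert_le _ _).trans (by simp)
          rw [Finset.card_univ, Fintype.card_fin] at hcard
          omega
        have hki1 := hk1 i
        have hkj1 := hk1 j
        have hkin := hkn i
        have hkjn := hkn j
        have hkln : k i + k j = n := by
          have h0 : ((k i + k j : ℕ) : ZMod n) = 0 := by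
            push_cast
            linear_combination hki - hai
          rw [ZMod.natCast_eq_zero_iff] at h0
          obtain ⟨c, hc⟩ := h0
          have hklt : k i + k j < 2 * n := by omega
          have hc2 : c < 2 := by
            by_contra hcc
            push_neg at hcc
            have : 2 * n ≤ n * c := by
              calc 2 * n = n * 2 := by ring
              _ ≤ n * c := Nat.mul_le_mul_left n hcc
            omega
          interval_cases c <;> omega
        have hm : s(a m, a m + 1) ∈ (P m).edges := memEdge m (a m) (by rw [hself m]; exact hk1 m)
        rcases Nat.lt_or_ge ((a m - a i).val) (k i) with h | h
        · exact hdisj m i hmi _ hm (memEdge i (a m) h)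
        · have hcov := cover (a i) (k i) (k j) hkln (a m) (by omega)
          rw [hki] at hcov
          exact hdisj m j hmj _ hm (memEdge j (a m) hcov)
    · intro i
      refine ⟨P i, hpath i, ?_⟩
      intro j hji
      have key : ∀ v : ZMod n, (v = s j ∨ v = t j) → v ∉ (P i).support.tail.dropLast := by
        intro v hv hvin
        rw [hintl i] at hvin
        obtain ⟨mm, hm0, hmk, rfl⟩ := hvin
        have hkin := hkn i
        have hkjn := hkn j
        have hki1 := hk1 i
        have hkj1 := hk1 j
        have hs := hsym j
        rw [Sym2.eq_iff] at hs
        have hvj : a i + (mm : ZMod n) = a j ∨ a i + (mm : ZMod n) = a j + (k j : ZMod n) := by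
          rcases hv with hv | hv <;> rcases hs with ⟨h1, h2⟩ | ⟨h1, h2⟩
          · exact Or.inl (hv.trans h1)
          · exact Or.inr (hv.trans h1)
          · exact Or.inr (hv.trans h2)
          · exact Or.inl (hv.trans h2)
        rcases hvj with hvj | hvj
        · have e1 : s(a i + (mm : ZMod n), a i + (mm : ZMod n) + 1) ∈ (P i).edges :=
            memEdge i _ (by rw [zself_add_val (by omega)]; omega)
          have e2 : s(a i + (mm : ZMod n), a i + (mm : ZMod n) + 1) ∈ (P j).edges :=
            memEdge j _ (by rw [hvj, hself j]; exact hk1 j)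
          exact hdisj i j hji.symm _ e1 e2
        · have hu1 : (a i + (mm : ZMod n) - 1 - a i).val < k i := by
            have hc : a i + (mm : ZMod n) - 1 - a i = ((mm - 1 : ℕ) : ZMod n) := by
              rw [Nat.cast_sub (by omega : 1 ≤ mm)]
              push_cast
              ring
            rw [hc, ZMod.val_cast_of_lt (by omega)]
            omega
          have hu2 : (a i + (mm : ZMod n) - 1 - a j).val < k j := by
            have hc : a i + (mm : ZMod n) - 1 - a j = ((k j - 1 : ℕ) : ZMod n) := by
              rw [Nat.cast_sub (hk1 j)]
              push_cast
              linear_combination hvj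
            rw [hc, ZMod.val_cast_of_lt (by omega)]
            have := hk1 j
            omega
          exact hdisj i j hji.symm _ (memEdge i _ hu1) (memEdge j _ hu2)
      exact ⟨fun h => key (s j) (Or.inl rfl) h, fun h => key (t j) (Or.inr rfl) h⟩
  · rintro ⟨hdist, hQ⟩
    choose Q hQp hQa using hQ
    refine ⟨Q, hQp, ?_⟩
    intro i j hij e hei hej
    obtain ⟨ai, ki, hk1i, hkni, hsymi, hedgei, hinti⟩ := arc_desc hn (hst i) (Q i) (hQp i)
    obtain ⟨aj, kj, hk1j, hknj, hsymj, hedgej, hintj⟩ := arc_desc hn (hst j) (Q j) (hQp j)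
    rw [hedgei] at hei
    rw [hedgej] at hej
    obtain ⟨m1, hm1, he1⟩ := hei
    obtain ⟨m2, hm2, he2⟩ := hej
    have hf : ai + (m1 : ZMod n) = aj + (m2 : ZMod n) := edge_lab_inj hn (he1.symm.trans he2)
    have hfi : (ai + (m1 : ZMod n) - ai).val < ki := by
      rw [zself_add_val (by omega)]
      omega
    have hfj : (ai + (m1 : ZMod n) - aj).val < kj := by
      rw [hf, zself_add_val (by omega)]
      omega
    have mkHi : ∀ (p q : Fin d) (hpq : q ≠ p) (ap aq : ZMod n) (kp kq : ℕ),
        (s(s p, t p) = s(ap, ap + (kp : ZMod n))) →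
        (s(s q, t q) = s(aq, aq + (kq : ZMod n))) →
        (∀ v, v ∈ (Q p).support.tail.dropLast ↔ ∃ c, 0 < c ∧ c < kp ∧ v = ap + (c : ZMod n)) →
        ∀ v : ZMod n, 0 < (v - ap).val → (v - ap).val < kp →
          v ≠ aq ∧ v ≠ aq + (kq : ZMod n) := by
      intro p q hpq ap aq kp kq hsp hsq hintp v h0 hlt
      have hvint : v ∈ (Q p).support.tail.dropLast := by
        rw [hintp]
        refine ⟨(v - ap).val, h0, hlt, ?_⟩
        rw [ZMod.natCast_zmod_val]
        ring
      have h1 := (hQa p q hpq).1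
      have h2 := (hQa p q hpq).2
      rw [Sym2.eq_iff] at hsq
      rcases hsq with ⟨hq1, hq2⟩ | ⟨hq1, hq2⟩
      · constructor
        · intro hv
          exact h1 (by rwa [hq1, ← hv])
        · intro hv
          exact h2 (by rwa [hq2, ← hv])
      · constructor
        · intro hv
          exact h2 (by rwa [hq2, ← hv])
        · intro hv
          exact h1 (by rwa [hq1, ← hv])
    have hHi := mkHi i j hij.symm ai aj ki kj hsymi hsymj hinti
    have hHj := mkHi j i hij aj ai kj ki hsymj hsymi hintj
    have hne : s(ai, ai + (ki : ZMod n)) ≠ s(aj, aj + (kj : ZMod n)) := by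
      rw [← hsymi, ← hsymj]
      exact hdist i j hij
    exact core hn ai aj ki kj hk1i hkni hk1j hknj hHi hHj hne (ai + (m1 : ZMod n)) hfi hfj
end
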